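/- Break-even condition: if (s,p) is an optimal contract, then s satisfies (BE), i.e. δ·(π(s_{t+1}) − π(s_t)) = w(s_{t−1}) − w(s_t) for every t ≥ 1. -/

import Mathlib

open Set Filter

/-- Principal's continuation value `Π_t(s,p) = Σ_{τ=t}^∞ δ^{τ−t}(π(s_τ) − p_τ)`. -/
noncomputable def PiVal (δ : ℝ) (π : ℝ → ℝ) (s p : ℕ → ℝ) (t : ℕ) : ℝ :=
  ∑' k : ℕ, δ ^ k * (π (s (t + k)) - p (t + k))

/-- Expert's continuation value `W_t(s,p) = Σ_{τ=t}^∞ δ^{τ−t}(w(s_τ) + p_τ)`. -/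
noncomputable def WVal (δ : ℝ) (w : ℝ → ℝ) (s p : ℕ → ℝ) (t : ℕ) : ℝ :=
  ∑' k : ℕ, δ ^ k * (w (s (t + k)) + p (t + k))

/-- A contract: `s` takes values in `[0,1]`, `s 0 = 0`, and `t ↦ δ^t·p_t` is summable. -/
def IsContract (δ : ℝ) (s p : ℕ → ℝ) : Prop :=
  (∀ t, s t ∈ Set.Icc (0 : ℝ) 1) ∧ s 0 = 0 ∧ Summable fun t => δ ^ t * p t

/-- Implementability: feasibility (monotone `s`, nonnegative `p`) plus (P-IC) and (E-IC). -/
def Implementable (δ : ℝ) (π w : ℝ → ℝ) (s p : ℕ → ℝ) : Prop :=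
  IsContract δ s p ∧ Monotone s ∧ (∀ t, 0 ≤ p t) ∧
  (∀ t, π (s t) / (1 - δ) ≤ PiVal δ π s p t) ∧
  (∀ t, w (s t) / (1 - δ) ≤ WVal δ w s p (t + 1))

/-- An optimal contract maximizes the principal's time-0 profit among implementable contracts. -/
def Optimal (δ : ℝ) (π w : ℝ → ℝ) (s p : ℕ → ℝ) : Prop :=
  Implementable δ π w s p ∧
  ∀ s' p' : ℕ → ℝ, Implementable δ π w s' p' → PiVal δ π s' p' 0 ≤ PiVal δ π s p 0

/-- The break-even condition (BE): `δ·(π(s_{t+1}) − π(s_t)) = w(s_{t−1}) − w(s_t)` for every `t ≥ 1`. -/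
def BE (δ : ℝ) (π w : ℝ → ℝ) (s : ℕ → ℝ) : Prop :=
  ∀ t : ℕ, 1 ≤ t → δ * (π (s (t + 1)) - π (s t)) = w (s (t - 1)) - w (s t)

noncomputable def QVal (δ : ℝ) (π w : ℝ → ℝ) (σ : ℕ → ℝ) (t : ℕ) : ℝ :=
  ∑' k : ℕ, δ ^ k * (π (σ (t + k)) + w (σ (t + k)))

/-- The "binding" payment scheme associated to a path. -/
noncomputable def starPay (δ : ℝ) (w : ℝ → ℝ) (σ : ℕ → ℝ) : ℕ → ℝ
  | 0 => 0
  | (u+1) => (w (σ u) - w (σ (u+1))) / (1 - δ)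

@[simp] lemma starPay_zero (δ : ℝ) (w : ℝ → ℝ) (σ : ℕ → ℝ) : starPay δ w σ 0 = 0 := rfl
@[simp] lemma starPay_succ (δ : ℝ) (w : ℝ → ℝ) (σ : ℕ → ℝ) (u : ℕ) :
    starPay δ w σ (u+1) = (w (σ u) - w (σ (u+1))) / (1 - δ) := rfl


lemma summable_geo_bdd {δ : ℝ} (h0 : 0 ≤ δ) (h1 : δ < 1) (c : ℕ → ℝ) (C : ℝ)
    (hC : ∀ n, |c n| ≤ C) : Summable fun k => δ ^ k * c k := by
  apply Summable.of_norm_bounded (g := fun k => δ ^ k * C)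
    ((summable_geometric_of_lt_one h0 h1).mul_right C)
  intro k
  rw [Real.norm_eq_abs, abs_mul, abs_pow, abs_of_nonneg h0]
  exact mul_le_mul_of_nonneg_left (hC k) (pow_nonneg h0 k)

lemma summable_shift {δ : ℝ} (hδ : 0 < δ) {p : ℕ → ℝ}
    (hp : Summable fun n => δ ^ n * p n) (t : ℕ) :
    Summable fun k => δ ^ k * p (t + k) := by
  have h1 : Summable fun k => δ ^ (k + t) * p (k + t) := (summable_nat_add_iff t).mpr hp
  have h2 := h1.mul_left ((δ ^ t)⁻¹)
  refine h2.congr fun k => ?_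
  have hne : (δ : ℝ) ^ t ≠ 0 := pow_ne_zero _ (ne_of_gt hδ)
  rw [pow_add]
  rw [Nat.add_comm t k]
  field_simp

lemma tsum_head {δ : ℝ} (a : ℕ → ℝ) (h : Summable fun k => δ ^ k * a k) :
    ∑' k, δ ^ k * a k = a 0 + δ * ∑' k, δ ^ k * a (k + 1) := by
  rw [Summable.tsum_eq_zero_add h]
  simp only [pow_zero, one_mul]
  congr 1
  rw [← tsum_mul_left]
  congr 1; funext k; ring

lemma tsum_telescope_geo {f : ℕ → ℝ} (hs : Summable fun k => f k - f (k + 1))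
    (hf : Tendsto f atTop (nhds 0)) : ∑' k, (f k - f (k + 1)) = f 0 := by
  have h1 := hs.hasSum.tendsto_sum_nat
  have h2 : (fun n => ∑ i ∈ Finset.range n, (f i - f (i + 1))) = fun n => f 0 - f n := by
    funext n; exact Finset.sum_range_sub' f n
  rw [h2] at h1
  have h3 : Tendsto (fun n => f 0 - f n) atTop (nhds (f 0 - 0)) :=
    tendsto_const_nhds.sub hf
  simpa using tendsto_nhds_unique h1 (by simpa using h3)

/-- Recursion for WVal. -/
lemma WVal_rec {δ : ℝ} (w : ℝ → ℝ) (s p : ℕ → ℝ) (t : ℕ)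
    (h : Summable fun k => δ ^ k * (w (s (t + k)) + p (t + k))) :
    WVal δ w s p t = (w (s t) + p t) + δ * WVal δ w s p (t + 1) := by
  unfold WVal
  have := tsum_head (fun k => w (s (t + k)) + p (t + k)) h
  rw [this, Nat.add_zero]
  congr 2
  apply tsum_congr
  intro k
  rw [show t + (k + 1) = t + 1 + k from by omega]

/-- Recursion for PiVal. -/
lemma PiVal_rec {δ : ℝ} (π : ℝ → ℝ) (s p : ℕ → ℝ) (t : ℕ)
    (h : Summable fun k => δ ^ k * (π (s (t + k)) - p (t + k))) :
    PiVal δ π s p t = (π (s t) - p t) + δ * PiVal δ π s p (t + 1) := by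
  unfold PiVal
  have := tsum_head (fun k => π (s (t + k)) - p (t + k)) h
  rw [this, Nat.add_zero]
  congr 2
  apply tsum_congr
  intro k
  rw [show t + (k + 1) = t + 1 + k from by omega]

/-- For the "binding" payments `q`, the expert's continuation value is pinned. -/
lemma WVal_star {δ : ℝ} (hδ0 : 0 < δ) (hδ1 : δ < 1) (w : ℝ → ℝ) (s q : ℕ → ℝ)
    (Cw : ℝ) (hCw : ∀ t, |w (s t)| ≤ Cw)
    (hq : ∀ u, q (u + 1) = (w (s u) - w (s (u + 1))) / (1 - δ)) (t : ℕ) :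
    WVal δ w s q (t + 1) = w (s t) / (1 - δ) := by
  have h1δ : (0:ℝ) < 1 - δ := by linarith
  set f : ℕ → ℝ := fun k => δ ^ k * (w (s (t + k)) / (1 - δ)) with hf
  have hterm : ∀ k, δ ^ k * (w (s (t + 1 + k)) + q (t + 1 + k)) = f k - f (k + 1) := by
    intro k
    have h1 : t + 1 + k = (t + k) + 1 := by omega
    rw [h1, hq (t + k), hf]
    simp only
    have h2 : t + (k + 1) = (t + k) + 1 := by omega
    rw [h2]
    field_simp
    ring
  have hsum : Summable fun k => δ ^ k * (w (s (t + 1 + k)) + q (t + 1 + k)) := by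
    apply summable_geo_bdd (le_of_lt hδ0) hδ1 _ (Cw + 2 * Cw / (1 - δ))
    intro n
    have h1 : t + 1 + n = (t + n) + 1 := by omega
    rw [h1, hq (t + n)]
    refine (abs_add_le _ _).trans (add_le_add (hCw _) ?_)
    rw [abs_div, abs_of_pos h1δ, div_le_div_iff_of_pos_right h1δ]
    calc |w (s (t + n)) - w (s (t + n + 1))| ≤ |w (s (t + n))| + |w (s (t + n + 1))| := abs_sub _ _
      _ ≤ Cw + Cw := add_le_add (hCw _) (hCw _)
      _ = 2 * Cw := by ring
  have hf0 : Tendsto f atTop (nhds 0) := by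
    apply squeeze_zero_norm (a := fun k => δ ^ k * (Cw / (1 - δ)))
    · intro n
      rw [hf]
      simp only [Real.norm_eq_abs, abs_mul, abs_pow, abs_of_pos hδ0, abs_div, abs_of_pos h1δ]
      exact mul_le_mul_of_nonneg_left (by gcongr; exact hCw _) (pow_nonneg hδ0.le n)
    · simpa using (tendsto_pow_atTop_nhds_zero_of_lt_one hδ0.le hδ1).mul_const (Cw / (1 - δ))
  unfold WVal
  calc (∑' k : ℕ, δ ^ k * (w (s (t + 1 + k)) + q (t + 1 + k)))
      = ∑' k, (f k - f (k + 1)) := by exact tsum_congr fun k => hterm k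
    _ = f 0 := tsum_telescope_geo (by rw [← funext hterm]; exact hsum) hf0
    _ = w (s t) / (1 - δ) := by simp [hf]
section Helpers
variable {δ : ℝ} (hδ0 : 0 < δ) (hδ1 : δ < 1)

lemma path_bdd {f : ℝ → ℝ} {C : ℝ} (hC : ∀ x ∈ Set.Icc (0:ℝ) 1, ‖f x‖ ≤ C)
    {σ : ℕ → ℝ} (hIcc : ∀ t, σ t ∈ Set.Icc (0:ℝ) 1) : ∀ n, |f (σ n)| ≤ C :=
  fun n => hC _ (hIcc n)

include hδ0 hδ1 in
lemma summable_path {c : ℕ → ℝ} {C : ℝ} (hC : ∀ n, |c n| ≤ C) (t : ℕ) :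
    Summable fun k => δ ^ k * c (t + k) :=
  summable_geo_bdd hδ0.le hδ1 _ C (fun n => hC (t + n))

include hδ0 hδ1 in
lemma summable_sub_p {c : ℕ → ℝ} {C : ℝ} (hC : ∀ n, |c n| ≤ C) {p : ℕ → ℝ}
    (hp : Summable fun n => δ ^ n * p n) (t : ℕ) :
    Summable fun k => δ ^ k * (c (t + k) - p (t + k)) :=
  ((summable_path hδ0 hδ1 hC t).sub (summable_shift hδ0 hp t)).congr fun k => by ring

include hδ0 hδ1 in
lemma summable_add_p {c : ℕ → ℝ} {C : ℝ} (hC : ∀ n, |c n| ≤ C) {p : ℕ → ℝ}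
    (hp : Summable fun n => δ ^ n * p n) (t : ℕ) :
    Summable fun k => δ ^ k * (c (t + k) + p (t + k)) :=
  ((summable_path hδ0 hδ1 hC t).add (summable_shift hδ0 hp t)).congr fun k => by ring

include hδ0 hδ1 in
lemma summable_G {π w : ℝ → ℝ} {Cπ Cw : ℝ}
    (hCπ : ∀ x ∈ Set.Icc (0:ℝ) 1, ‖π x‖ ≤ Cπ) (hCw : ∀ x ∈ Set.Icc (0:ℝ) 1, ‖w x‖ ≤ Cw)
    {σ : ℕ → ℝ} (hIcc : ∀ t, σ t ∈ Set.Icc (0:ℝ) 1) (t : ℕ) :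
    Summable fun k => δ ^ k * (π (σ (t + k)) + w (σ (t + k))) := by
  exact summable_path hδ0 hδ1 (c := fun n => π (σ n) + w (σ n)) (C := Cπ + Cw)
    (fun n => (abs_add_le _ _).trans (add_le_add (path_bdd hCπ hIcc n) (path_bdd hCw hIcc n))) t

include hδ0 hδ1 in
lemma PiVal_eq_Q_sub_W {π w : ℝ → ℝ} {Cπ Cw : ℝ}
    (hCπ : ∀ x ∈ Set.Icc (0:ℝ) 1, ‖π x‖ ≤ Cπ) (hCw : ∀ x ∈ Set.Icc (0:ℝ) 1, ‖w x‖ ≤ Cw)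
    {σ : ℕ → ℝ} (hIcc : ∀ t, σ t ∈ Set.Icc (0:ℝ) 1) {p : ℕ → ℝ}
    (hp : Summable fun n => δ ^ n * p n) (t : ℕ) :
    PiVal δ π σ p t = QVal δ π w σ t - WVal δ w σ p t := by
  have hA := summable_sub_p hδ0 hδ1 (path_bdd hCπ hIcc) hp t
  have hB := summable_add_p hδ0 hδ1 (path_bdd hCw hIcc) hp t
  have : PiVal δ π σ p t + WVal δ w σ p t = QVal δ π w σ t := by
    rw [PiVal, WVal, QVal, ← Summable.tsum_add hA hB]
    exact tsum_congr fun k => by ring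
  linarith

include hδ0 hδ1 in
lemma QVal_le {π w : ℝ → ℝ} {Cπ Cw : ℝ}
    (hCπ : ∀ x ∈ Set.Icc (0:ℝ) 1, ‖π x‖ ≤ Cπ) (hCw : ∀ x ∈ Set.Icc (0:ℝ) 1, ‖w x‖ ≤ Cw)
    {σ : ℕ → ℝ} (hIcc : ∀ t, σ t ∈ Set.Icc (0:ℝ) 1) (t : ℕ) :
    QVal δ π w σ t ≤ (Cπ + Cw) / (1 - δ) := by
  have h1δ : (0:ℝ) < 1 - δ := by linarith
  have hsum := summable_G hδ0 hδ1 hCπ hCw hIcc t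
  have hgeo : Summable fun k : ℕ => δ ^ k * (Cπ + Cw) :=
    (summable_geometric_of_lt_one hδ0.le hδ1).mul_right _
  calc QVal δ π w σ t ≤ ∑' k : ℕ, δ ^ k * (Cπ + Cw) := by
        apply Summable.tsum_le_tsum (fun k => ?_) hsum hgeo
        apply mul_le_mul_of_nonneg_left _ (pow_nonneg hδ0.le k)
        have h1 := path_bdd hCπ hIcc (t + k); have h2 := path_bdd hCw hIcc (t + k)
        have := abs_le.mp h1; have := abs_le.mp h2
        rcases abs_le.mp h1 with ⟨_, u1⟩; rcases abs_le.mp h2 with ⟨_, u2⟩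
        linarith
    _ = (Cπ + Cw) / (1 - δ) := by
        rw [tsum_mul_right, tsum_geometric_of_lt_one hδ0.le hδ1]
        field_simp

end Helpers
section Star
variable {δ : ℝ} (hδ0 : 0 < δ) (hδ1 : δ < 1)

include hδ1 in
lemma starPay_abs_le {w : ℝ → ℝ} {Cw : ℝ}
    (hCw : ∀ x ∈ Set.Icc (0:ℝ) 1, ‖w x‖ ≤ Cw)
    {σ : ℕ → ℝ} (hIcc : ∀ t, σ t ∈ Set.Icc (0:ℝ) 1) (n : ℕ) :
    |starPay δ w σ n| ≤ 2 * Cw / (1 - δ) := by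
  have h1δ : (0:ℝ) < 1 - δ := by linarith
  have hCw0 : 0 ≤ Cw := le_trans (abs_nonneg _) (path_bdd hCw hIcc 0)
  cases n with
  | zero => simp; positivity
  | succ u =>
      rw [starPay_succ, abs_div, abs_of_pos h1δ, div_le_div_iff_of_pos_right h1δ]
      calc |w (σ u) - w (σ (u+1))| ≤ |w (σ u)| + |w (σ (u+1))| := abs_sub _ _
        _ ≤ Cw + Cw := add_le_add (path_bdd hCw hIcc u) (path_bdd hCw hIcc (u+1))
        _ = 2 * Cw := by ring

include hδ0 hδ1 in
lemma star_master (π w : ℝ → ℝ) {Cπ Cw : ℝ}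
    (hCπ : ∀ x ∈ Set.Icc (0:ℝ) 1, ‖π x‖ ≤ Cπ) (hCw : ∀ x ∈ Set.Icc (0:ℝ) 1, ‖w x‖ ≤ Cw)
    (hwa : StrictAntiOn w (Set.Icc 0 1))
    (σ : ℕ → ℝ) (hIcc : ∀ t, σ t ∈ Set.Icc (0:ℝ) 1) (hmono : Monotone σ) :
    (∀ t, WVal δ w σ (starPay δ w σ) (t+1) = w (σ t) / (1-δ))
    ∧ WVal δ w σ (starPay δ w σ) 0 = w (σ 0) / (1-δ)
    ∧ (∀ t, PiVal δ π σ (starPay δ w σ) t = QVal δ π w σ t - WVal δ w σ (starPay δ w σ) t)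
    ∧ (Summable fun n => δ ^ n * starPay δ w σ n)
    ∧ (∀ n, 0 ≤ starPay δ w σ n) := by
  have h1δ : (0:ℝ) < 1 - δ := by linarith
  set q := starPay δ w σ with hqdef
  have hqb := starPay_abs_le hδ1 hCw hIcc
  have hqsum : Summable fun n => δ ^ n * q n := summable_geo_bdd hδ0.le hδ1 _ _ hqb
  have hW1 : ∀ t, WVal δ w σ q (t+1) = w (σ t) / (1-δ) :=
    WVal_star hδ0 hδ1 w σ q Cw (path_bdd hCw hIcc) (fun u => rfl)
  have hW0 : WVal δ w σ q 0 = w (σ 0) / (1-δ) := by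
    rw [WVal_rec w σ q 0 (summable_add_p hδ0 hδ1 (path_bdd hCw hIcc) hqsum 0), hW1 0]
    show w (σ 0) + q 0 + δ * (w (σ 0) / (1 - δ)) = _
    rw [hqdef, starPay_zero]
    field_simp
    ring
  refine ⟨hW1, hW0, fun t => PiVal_eq_Q_sub_W hδ0 hδ1 hCπ hCw hIcc hqsum t, hqsum, ?_⟩
  intro n
  cases n with
  | zero => simp [hqdef]
  | succ u =>
      rw [hqdef, starPay_succ]
      apply div_nonneg _ h1δ.le
      have := hwa.antitoneOn (hIcc u) (hIcc (u+1)) (hmono (Nat.le_succ u))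
      linarith

include hδ0 hδ1 in
lemma QVal_update {π w : ℝ → ℝ} {Cπ Cw : ℝ}
    (hCπ : ∀ x ∈ Set.Icc (0:ℝ) 1, ‖π x‖ ≤ Cπ) (hCw : ∀ x ∈ Set.Icc (0:ℝ) 1, ‖w x‖ ≤ Cw)
    {σ : ℕ → ℝ} (hIcc : ∀ t, σ t ∈ Set.Icc (0:ℝ) 1)
    {x : ℝ} (hx : x ∈ Set.Icc (0:ℝ) 1) (m t : ℕ) (htm : t ≤ m) :
    QVal δ π w (Function.update σ m x) t
      = QVal δ π w σ t + δ ^ (m - t) * ((π x + w x) - (π (σ m) + w (σ m))) := by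
  set σ' := Function.update σ m x with hσ'
  have hIcc' : ∀ t, σ' t ∈ Set.Icc (0:ℝ) 1 := by
    intro u
    by_cases h : u = m
    · rw [hσ', h, Function.update_self]; exact hx
    · rw [hσ', Function.update_of_ne h]; exact hIcc u
  have hs1 := summable_G hδ0 hδ1 hCπ hCw hIcc' t
  have hs2 := summable_G hδ0 hδ1 hCπ hCw hIcc t
  have key : QVal δ π w σ' t - QVal δ π w σ t
      = ∑' k : ℕ, (δ ^ k * (π (σ' (t+k)) + w (σ' (t+k))) - δ ^ k * (π (σ (t+k)) + w (σ (t+k)))) := by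
    rw [Summable.tsum_sub hs1 hs2]; rfl
  have hsingle : ∑' k : ℕ, (δ ^ k * (π (σ' (t+k)) + w (σ' (t+k))) - δ ^ k * (π (σ (t+k)) + w (σ (t+k))))
      = δ ^ (m - t) * ((π x + w x) - (π (σ m) + w (σ m))) := by
    rw [tsum_eq_single (m - t)]
    · have : t + (m - t) = m := by omega
      rw [this, hσ', Function.update_self]; ring
    · intro k hk
      have : t + k ≠ m := by omega
      rw [hσ', Function.update_of_ne this]; ring
  rw [hsingle] at key
  linarith

end Star

/-- Any optimal contract satisfies the break-even condition (BE). -/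
theorem optimal_break_even
    (δ : ℝ) (hδ : δ ∈ Set.Ioo (0 : ℝ) 1) (π w : ℝ → ℝ)
    (hπc : ContinuousOn π (Set.Icc 0 1)) (hwc : ContinuousOn w (Set.Icc 0 1))
    (hπm : StrictMonoOn π (Set.Icc 0 1)) (hwa : StrictAntiOn w (Set.Icc 0 1))
    (hGm : StrictMonoOn (fun x => π x + w x) (Set.Icc 0 1))
    (s p : ℕ → ℝ) (hopt : Optimal δ π w s p) :
    BE δ π w s := by
  obtain ⟨himpl, hbest⟩ := hopt
  obtain ⟨⟨hsIcc, hs0, hsump⟩, hmono, hp0, hPIC, hEIC⟩ := himpl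
  obtain ⟨hδ0, hδ1⟩ := hδ
  have h1δ : (0:ℝ) < 1 - δ := by linarith
  obtain ⟨Cπ, hCπ⟩ := isCompact_Icc.exists_bound_of_continuousOn hπc
  obtain ⟨Cw, hCw⟩ := isCompact_Icc.exists_bound_of_continuousOn hwc
  obtain ⟨hW1, hW0, hPQq, hqsum, hq0⟩ := star_master hδ0 hδ1 π w hCπ hCw hwa s hsIcc hmono
  -- comparison of expert values
  have hWle : ∀ t, WVal δ w s (starPay δ w s) t ≤ WVal δ w s p t := by
    intro t
    cases t with
    | zero =>
        have hrecp : WVal δ w s p 0 = (w (s 0) + p 0) + δ * WVal δ w s p 1 :=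
          WVal_rec w s p 0 (summable_add_p hδ0 hδ1 (path_bdd hCw hsIcc) hsump 0)
        have h1 := hEIC 0
        have h2 : δ * (w (s 0) / (1 - δ)) ≤ δ * WVal δ w s p (0 + 1) :=
          mul_le_mul_of_nonneg_left h1 hδ0.le
        rw [hW0, hrecp]
        have h3 : w (s 0) / (1 - δ) = w (s 0) + δ * (w (s 0) / (1 - δ)) := by
          field_simp; ring
        rw [h3]
        have := hp0 0
        simp only [Nat.zero_add] at h2
        linarith
    | succ u => rw [hW1 u]; exact hEIC u
  have hPQp : ∀ t, PiVal δ π s p t = QVal δ π w s t - WVal δ w s p t :=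
    fun t => PiVal_eq_Q_sub_W hδ0 hδ1 hCπ hCw hsIcc hsump t
  obtain ⟨a, hadef⟩ : ∃ a : ℕ → ℝ,
      a = fun T => PiVal δ π s (starPay δ w s) T - π (s T) / (1 - δ) := ⟨_, rfl⟩
  have ha0 : ∀ t, 0 ≤ a t := by
    intro t
    have h1 : PiVal δ π s p t ≤ PiVal δ π s (starPay δ w s) t := by
      rw [hPQp t, hPQq t]; linarith [hWle t]
    have := hPIC t
    simp only [hadef]; linarith
  have haQ : ∀ T : ℕ, a (T+1)
      = QVal δ π w s (T+1) - w (s T) / (1-δ) - π (s (T+1)) / (1-δ) := by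
    intro T
    simp only [hadef]
    rw [hPQq (T+1), hW1 T]
  -- one-step recursion
  have hrec : ∀ T : ℕ, a (T+1) - δ * a (T+2)
      = (δ * (π (s (T+2)) - π (s (T+1))) - (w (s T) - w (s (T+1)))) / (1 - δ) := by
    intro T
    have hs1 : Summable fun k => δ ^ k * (π (s ((T+1) + k)) - starPay δ w s ((T+1) + k)) :=
      summable_sub_p hδ0 hδ1 (path_bdd hCπ hsIcc) hqsum (T+1)
    have h := PiVal_rec π s (starPay δ w s) (T+1) hs1
    rw [starPay_succ] at h
    rw [show T + 1 + 1 = T + 2 from by omega] at h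
    simp only [hadef]
    rw [h]
    field_simp
    try ring
  -- the key perturbation step
  have hstep : ∀ T : ℕ, δ * (π (s (T+2)) - π (s (T+1))) ≤ w (s T) - w (s (T+1)) := by
    intro T
    by_contra hlt'
    push_neg at hlt'
    have hw01 : w (s (T+1)) ≤ w (s T) :=
      hwa.antitoneOn (hsIcc T) (hsIcc (T+1)) (hmono (Nat.le_succ T))
    have hs12 : s (T+1) < s (T+2) := by
      rcases lt_or_eq_of_le (hmono (show T + 1 ≤ T + 2 by omega)) with h | h
      · exact h
      · exfalso
        rw [← h] at hlt'
        simp at hlt'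
        linarith
    have haT : 0 < a (T+1) := by
      have h1 := hrec T
      have h2 := ha0 (T+2)
      have h3 : 0 < (δ * (π (s (T+2)) - π (s (T+1))) - (w (s T) - w (s (T+1)))) / (1-δ) :=
        div_pos (by linarith) h1δ
      linarith [h1, h3, mul_nonneg hδ0.le h2]
    set c := s (T+1) with hcdef
    have hcIcc : c ∈ Set.Icc (0:ℝ) 1 := hsIcc (T+1)
    set g : ℝ → ℝ := fun x => (w c - w x) + (δ/(1-δ)) * (π x - π c) with hgdef
    have hgc : ContinuousWithinAt g (Set.Icc 0 1) c := by
      apply ContinuousWithinAt.add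
      · exact continuousWithinAt_const.sub (hwc c hcIcc)
      · exact continuousWithinAt_const.mul ((hπc c hcIcc).sub continuousWithinAt_const)
    have hgc' : Filter.Tendsto g (nhdsWithin c (Set.Icc 0 1)) (nhds 0) := by
      have hg0 : g c = 0 := by simp [hgdef]
      have h' : Filter.Tendsto g (nhdsWithin c (Set.Icc 0 1)) (nhds (g c)) := hgc
      rw [hg0] at h'
      exact h'
    have hev : ∀ᶠ x in nhdsWithin c (Set.Icc 0 1), g x < a (T+1) :=
      Filter.Tendsto.eventually_lt_const haT hgc'
    have hsub : Set.Ioc c (s (T+2)) ⊆ Set.Icc (0:ℝ) 1 := fun y hy =>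
      ⟨le_trans hcIcc.1 hy.1.le, le_trans hy.2 (hsIcc (T+2)).2⟩
    have hNB : (nhdsWithin c (Set.Ioc c (s (T+2)))).NeBot := by
      rw [← mem_closure_iff_nhdsWithin_neBot, closure_Ioc (ne_of_lt hs12)]
      exact ⟨le_refl c, hs12.le⟩
    have hev2 : ∀ᶠ x in nhdsWithin c (Set.Ioc c (s (T+2))), g x < a (T+1) :=
      hev.filter_mono (nhdsWithin_mono c hsub)
    obtain ⟨x, hgx, hxIoc⟩ := (hev2.and eventually_mem_nhdsWithin).exists
    have hxIcc : x ∈ Set.Icc (0:ℝ) 1 := hsub hxIoc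
    -- the perturbed path
    set s' := Function.update s (T+1) x with hs'def
    have hs'at : s' (T+1) = x := Function.update_self _ _ _
    have hs'ne : ∀ u, u ≠ T+1 → s' u = s u := fun u hu => Function.update_of_ne hu _ _
    have hs'Icc : ∀ u, s' u ∈ Set.Icc (0:ℝ) 1 := by
      intro u; by_cases h : u = T+1
      · rw [h, hs'at]; exact hxIcc
      · rw [hs'ne u h]; exact hsIcc u
    have hs'mono : Monotone s' := by
      apply monotone_nat_of_le_succ
      intro n
      rcases eq_or_ne n (T+1) with h | h
      · subst h
        rw [hs'at, hs'ne (T+1+1) (by omega), show T + 1 + 1 = T + 2 from by omega]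
        exact hxIoc.2
      · rcases eq_or_ne (n+1) (T+1) with h2 | h2
        · rw [hs'ne n h, h2, hs'at]
          exact le_trans (hmono (show n ≤ T + 1 by omega)) hxIoc.1.le
        · rw [hs'ne n h, hs'ne (n+1) h2]; exact hmono (Nat.le_succ n)
    have hs'0 : s' 0 = 0 := by rw [hs'ne 0 (by omega)]; exact hs0
    obtain ⟨hW1', hW0', hPQ', hqsum', hq0'⟩ :=
      star_master hδ0 hδ1 π w hCπ hCw hwa s' hs'Icc hs'mono
    have hQc : ∀ t, t ≤ T+1 → QVal δ π w s' t
        = QVal δ π w s t + δ ^ (T+1-t) * ((π x + w x) - (π c + w c)) := by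
      intro t ht
      rw [hs'def, hcdef]
      exact QVal_update hδ0 hδ1 hCπ hCw hsIcc hxIcc (T+1) t ht
    have hQtail : ∀ t, T+2 ≤ t → QVal δ π w s' t = QVal δ π w s t := by
      intro t ht
      unfold QVal
      apply tsum_congr; intro k
      rw [hs'ne (t+k) (by omega)]
    have hGlt : π c + w c < π x + w x := hGm hcIcc hxIcc hxIoc.1
    have hwxc : w x < w c := hwa hcIcc hxIcc hxIoc.1
    -- P-IC for the perturbed star contract
    have hPIC' : ∀ t, π (s' t) / (1-δ) ≤ PiVal δ π s' (starPay δ w s') t := by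
      intro t
      rw [hPQ' t]
      cases t with
      | zero =>
          rw [hW0', hs'0, hQc 0 (by omega)]
          have h0 := ha0 0
          have h0' : a 0 = QVal δ π w s 0 - w (s 0) / (1-δ) - π (s 0) / (1-δ) := by
            simp only [hadef]; rw [hPQq 0, hW0]
          rw [h0', hs0] at h0
          have hpow : 0 ≤ δ ^ (T+1-0) * ((π x + w x) - (π c + w c)) :=
            mul_nonneg (pow_nonneg hδ0.le _) (by linarith)
          linarith
      | succ u =>
          rw [hW1' u]
          rcases Nat.lt_or_ge (u+1) (T+1) with hu | hu
          · -- u+1 ≤ T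
            rw [hs'ne (u+1) (by omega), hs'ne u (by omega), hQc (u+1) (by omega)]
            have h0 := ha0 (u+1)
            rw [haQ u] at h0
            have hpow : 0 ≤ δ ^ (T+1-(u+1)) * ((π x + w x) - (π c + w c)) :=
              mul_nonneg (pow_nonneg hδ0.le _) (by linarith)
            linarith
          · rcases Nat.lt_or_ge (T+1) (u+1) with hu2 | hu2
            · -- u+1 ≥ T+2
              rcases eq_or_ne u (T+1) with he | he
              · -- t = T+2
                subst he
                rw [hs'ne (T+1+1) (by omega), hs'at,
                  hQtail (T+1+1) (by omega), show T + 1 + 1 = T + 2 from by omega]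
                have h0 := ha0 (T+2)
                rw [haQ (T+1), show T + 1 + 1 = T + 2 from by omega] at h0
                have hdiv : w x / (1-δ) ≤ w c / (1-δ) :=
                  (div_le_div_iff_of_pos_right h1δ).mpr hwxc.le
                rw [hcdef] at hdiv
                linarith
              · -- u ≥ T+2
                rw [hs'ne (u+1) (by omega), hs'ne u (by omega), hQtail (u+1) (by omega)]
                have h0 := ha0 (u+1)
                rw [haQ u] at h0
                linarith
            · -- u+1 = T+1, i.e. u = T
              have he : u = T := by omega
              subst he
              rw [hs'at, hs'ne u (by omega), hQc (u+1) (by omega),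
                show u + 1 - (u + 1) = 0 from by omega, pow_zero, one_mul]
              have h0 := haQ u
              have hid : π x / (1-δ) - π c / (1-δ) - (π x - π c)
                  = (δ/(1-δ)) * (π x - π c) := by
                field_simp; ring
              have hgx' : (w c - w x) + (δ/(1-δ)) * (π x - π c) < a (u+1) := hgx
              rw [h0] at hgx'
              rw [← hcdef] at hgx'
              linarith
    have himpl' : Implementable δ π w s' (starPay δ w s') :=
      ⟨⟨hs'Icc, hs'0, hqsum'⟩, hs'mono, hq0', hPIC', fun t => (hW1' t).ge⟩
    have hfin := hbest s' (starPay δ w s') himpl'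
    have h1 : PiVal δ π s' (starPay δ w s') 0
        = QVal δ π w s 0 + δ ^ (T+1-0) * ((π x + w x) - (π c + w c)) - w 0 / (1-δ) := by
      rw [hPQ' 0, hW0', hQc 0 (by omega), hs'0]
    have h2 : PiVal δ π s p 0 ≤ QVal δ π w s 0 - w 0 / (1-δ) := by
      rw [hPQp 0]
      have h3 := hWle 0
      rw [hW0, hs0] at h3
      linarith
    have h3 : 0 < δ ^ (T+1-0) * ((π x + w x) - (π c + w c)) :=
      mul_pos (pow_pos hδ0 _) (by linarith)
    linarith
  -- bound for the slack
  have habd : ∀ T : ℕ, a (T+1) ≤ (Cπ + Cw)/(1-δ) + Cw/(1-δ) + Cπ/(1-δ) := by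
    intro T
    have hQ := QVal_le hδ0 hδ1 hCπ hCw hsIcc (T+1)
    have hw := abs_le.mp (path_bdd hCw hsIcc T)
    have hπb := abs_le.mp (path_bdd hCπ hsIcc (T+1))
    rw [haQ T]
    have e1 : -(Cw/(1-δ)) ≤ w (s T) / (1-δ) := by
      rw [← neg_div]
      exact (div_le_div_iff_of_pos_right h1δ).mpr hw.1
    have e2 : -(Cπ/(1-δ)) ≤ π (s (T+1)) / (1-δ) := by
      rw [← neg_div]
      exact (div_le_div_iff_of_pos_right h1δ).mpr hπb.1
    linarith
  -- iterate the recursion to kill the slack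
  have hle : ∀ T, a (T+1) ≤ δ * a (T+2) := by
    intro T
    have h1 : a (T+1) - δ * a (T+2) ≤ 0 := by
      rw [hrec T]
      exact div_nonpos_of_nonpos_of_nonneg (by linarith [hstep T]) h1δ.le
    linarith
  have hiter : ∀ T k, a (T+1) ≤ δ ^ k * a (T+1+k) := by
    intro T k
    induction k with
    | zero => simp
    | succ n ih =>
        calc a (T+1) ≤ δ ^ n * a (T+1+n) := ih
          _ ≤ δ ^ n * (δ * a (T+1+n+1)) := by
              apply mul_le_mul_of_nonneg_left _ (pow_nonneg hδ0.le n)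
              have := hle (T+n)
              rw [show T + n + 1 = T+1+n from by omega, show T + n + 2 = T+1+n+1 from by omega] at this
              exact this
          _ = δ ^ (n+1) * a (T+1+(n+1)) := by
              rw [pow_succ, show T + 1 + n + 1 = T+1+(n+1) from by omega]; ring
  have hzero : ∀ T, a (T+1) = 0 := by
    intro T
    have hub : ∀ k, a (T+1) ≤ δ ^ k * ((Cπ + Cw)/(1-δ) + Cw/(1-δ) + Cπ/(1-δ)) := by
      intro k
      calc a (T+1) ≤ δ ^ k * a (T+1+k) := hiter T k
        _ ≤ _ := by
            apply mul_le_mul_of_nonneg_left _ (pow_nonneg hδ0.le k)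
            have := habd (T+k)
            rw [show T + k + 1 = T+1+k from by omega] at this
            exact this
    have hlim : Filter.Tendsto (fun k => δ ^ k * ((Cπ + Cw)/(1-δ) + Cw/(1-δ) + Cπ/(1-δ)))
        atTop (nhds 0) := by
      simpa using (tendsto_pow_atTop_nhds_zero_of_lt_one hδ0.le hδ1).mul_const
        ((Cπ + Cw)/(1-δ) + Cw/(1-δ) + Cπ/(1-δ))
    have hle0 : a (T+1) ≤ 0 := le_of_tendsto_of_tendsto' tendsto_const_nhds hlim hub
    linarith [ha0 (T+1)]
  -- conclude
  intro t ht
  obtain ⟨T, rfl⟩ : ∃ T, t = T + 1 := ⟨t - 1, by omega⟩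
  have h := hrec T
  rw [hzero T, show T + 2 = (T+1) + 1 from by omega, hzero (T+1)] at h
  have h' : δ * (π (s (T+2)) - π (s (T+1))) - (w (s T) - w (s (T+1))) = 0 := by
    field_simp at h
    linarith
  rw [show T + 1 - 1 = T from by omega, show T + 1 + 1 = T + 2 from by omega]
  linarith
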